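/- Let A₁₁, A₁₂, A₂₂ be Riccati data on a complex separable Hilbert space H with diag{A₁₁} − A₂₂ ≫ 0, let (sₙ) be the successive approximations, and let s̲ and s̄ be the strong limits of the even subsequence s₀, s₂, … and of the odd subsequence s₁, s₃, …, respectively. Then s̲ ≤ s̄ in the Loewner order. -/

import Mathlib

open MeasureTheory ContinuousLinearMap Filter
open scoped ENNReal NNReal Topology

noncomputable section

/-- `ℓ²(H)`: the Hilbert space of square-summable sequences in `H`, indexed by `ℕ`
(index `k : ℕ` corresponds to the `(k+1)`-st entry in the paper's `1`-based indexing). -/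
abbrev l2 (H : Type*) [NormedAddCommGroup H] [InnerProductSpace ℂ H] : Type _ :=
  lp (fun _ : ℕ => H) 2

variable {H : Type*} [NormedAddCommGroup H] [InnerProductSpace ℂ H]

lemma memℓp_diag (q : H →L[ℂ] H) (ξ : l2 H) : Memℓp (fun k => q (ξ k)) 2 := by
  have h2 : (0:ℝ) < (2 : ℝ≥0∞).toReal := by norm_num
  apply memℓp_gen
  have hs : Summable (fun k => ‖q‖ ^ (2 : ℝ≥0∞).toReal * ‖ξ k‖ ^ (2 : ℝ≥0∞).toReal) :=
    ((lp.memℓp ξ).summable h2).mul_left _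
  refine Summable.of_nonneg_of_le (fun k => ?_) (fun k => ?_) hs
  · positivity
  · rw [← Real.mul_rpow (norm_nonneg _) (norm_nonneg _)]
    exact Real.rpow_le_rpow (norm_nonneg _) (q.le_opNorm _) (by norm_num)

/-- `diag{q}`: the bounded block-diagonal operator on `ℓ²(H)` acting componentwise,
`(diag{q} ξ)ₖ = q (ξₖ)`. -/
def diagOp (q : H →L[ℂ] H) : l2 H →L[ℂ] l2 H :=
  LinearMap.mkContinuous
    { toFun := fun ξ => ⟨fun k => q (ξ k), memℓp_diag q ξ⟩
      map_add' := fun ξ η => by ext k; simp [lp.coeFn_add] <;> rfl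
      map_smul' := fun c ξ => by ext k; simp [lp.coeFn_smul] }
    ‖q‖
    (by
      intro ξ
      have h2 : (0:ℝ) < (2 : ℝ≥0∞).toReal := by norm_num
      refine lp.norm_le_of_tsum_le h2 (by positivity) ?_
      have hξ : ‖ξ‖ ^ (2 : ℝ≥0∞).toReal = ∑' k, ‖ξ k‖ ^ (2 : ℝ≥0∞).toReal :=
        lp.norm_rpow_eq_tsum h2 ξ
      have hsum : Summable (fun k => ‖ξ k‖ ^ (2 : ℝ≥0∞).toReal) := (lp.memℓp ξ).summable h2
      calc ∑' k, ‖(fun k => q (ξ k)) k‖ ^ (2 : ℝ≥0∞).toReal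
          ≤ ∑' k, ‖q‖ ^ (2 : ℝ≥0∞).toReal * ‖ξ k‖ ^ (2 : ℝ≥0∞).toReal := by
            refine Summable.tsum_le_tsum (fun k => ?_) ?_ (hsum.mul_left _)
            · rw [← Real.mul_rpow (norm_nonneg _) (norm_nonneg _)]
              exact Real.rpow_le_rpow (norm_nonneg _) (q.le_opNorm _) (by norm_num)
            · refine Summable.of_nonneg_of_le (fun k => ?_) (fun k => ?_)
                (hsum.mul_left (‖q‖ ^ (2 : ℝ≥0∞).toReal))
              · positivity
              · rw [← Real.mul_rpow (norm_nonneg _) (norm_nonneg _)]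
                exact Real.rpow_le_rpow (norm_nonneg _) (q.le_opNorm _) (by norm_num)
        _ = (‖q‖ * ‖ξ‖) ^ (2 : ℝ≥0∞).toReal := by
            rw [tsum_mul_left, ← hξ, Real.mul_rpow (norm_nonneg _) (norm_nonneg _)])

@[simp] lemma diagOp_apply (q : H →L[ℂ] H) (ξ : l2 H) (k : ℕ) :
    (diagOp q ξ) k = q (ξ k) := rfl

/-- An operator is *strongly positive* (written `ρ ≫ 0` in the paper) if `δ • I ≤ ρ`
(Loewner order) for some `δ > 0`.  A strongly positive operator is boundedly invertible. -/
def StronglyPositive {E : Type*} [NormedAddCommGroup E] [InnerProductSpace ℂ E]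
    [CompleteSpace E] (ρ : E →L[ℂ] E) : Prop :=
  ∃ δ : ℝ, 0 < δ ∧ δ • (1 : E →L[ℂ] E) ≤ ρ

variable [CompleteSpace H]

/-- The Riccati map `ℱ(s) = A₁₁ + A₁₂ (diag{s} − A₂₂)⁻¹ A₁₂*`.  Here `Ring.inverse` is the
genuine inverse whenever `diag{s} − A₂₂` is boundedly invertible, which is guaranteed when
`diag{s} − A₂₂ ≫ 0`. -/
def riccatiMap (A11 : H →L[ℂ] H) (A12 : l2 H →L[ℂ] H) (A22 : l2 H →L[ℂ] l2 H)
    (s : H →L[ℂ] H) : H →L[ℂ] H :=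
  A11 + A12 ∘L Ring.inverse (diagOp s - A22) ∘L ContinuousLinearMap.adjoint A12

/-- The successive approximations `s₀ = A₁₁`, `s_{n+1} = ℱ(sₙ)`. -/
def riccatiSeq (A11 : H →L[ℂ] H) (A12 : l2 H →L[ℂ] H) (A22 : l2 H →L[ℂ] l2 H) :
    ℕ → (H →L[ℂ] H)
  | 0 => A11
  | n + 1 => riccatiMap A11 A12 A22 (riccatiSeq A11 A12 A22 n)

end

noncomputable section Aux

open ContinuousLinearMap

variable {H : Type*} [NormedAddCommGroup H] [InnerProductSpace ℂ H] [CompleteSpace H]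

lemma diagOp_coord_sub (s t : H →L[ℂ] H) (ξ : l2 H) (k : ℕ) :
    (diagOp (s - t) ξ) k = (diagOp s ξ - diagOp t ξ) k := by
  rw [lp.coeFn_sub, Pi.sub_apply]
  simp

lemma diagOp_sub (s t : H →L[ℂ] H) : diagOp (s - t) = diagOp s - diagOp t := by
  ext ξ
  have : diagOp (s - t) ξ = diagOp s ξ - diagOp t ξ := by
    apply lp.ext
    funext k
    exact diagOp_coord_sub s t ξ k
  simpa using this

lemma diagOp_adjoint (q : H →L[ℂ] H) :
    diagOp (ContinuousLinearMap.adjoint q) = ContinuousLinearMap.adjoint (diagOp q) := by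
  rw [ContinuousLinearMap.eq_adjoint_iff]
  intro ξ η
  rw [lp.inner_eq_tsum, lp.inner_eq_tsum]
  congr 1
  funext k
  simp only [diagOp_apply]
  exact ContinuousLinearMap.adjoint_inner_left q (η k) (ξ k)

lemma diagOp_isPositive {p : H →L[ℂ] H} (hp : p.IsPositive) : (diagOp p).IsPositive := by
  constructor
  · rw [← ContinuousLinearMap.isSelfAdjoint_iff_isSymmetric, ContinuousLinearMap.isSelfAdjoint_iff']
    rw [← diagOp_adjoint]
    congr 1
    exact ContinuousLinearMap.isSelfAdjoint_iff'.mp hp.isSelfAdjoint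
  · intro ξ
    rw [ContinuousLinearMap.reApplyInnerSelf_apply, lp.inner_eq_tsum]
    have hsummable : Summable fun k => (inner ℂ ((diagOp p ξ) k) (ξ k) : ℂ) :=
      lp.summable_inner (diagOp p ξ) ξ
    rw [RCLike.re_tsum _ hsummable]
    refine tsum_nonneg fun k => ?_
    simpa [ContinuousLinearMap.reApplyInnerSelf_apply] using hp.2 (ξ k)

lemma diagOp_mono {s t : H →L[ℂ] H} (hst : s ≤ t) : diagOp s ≤ diagOp t := by
  rw [ContinuousLinearMap.le_def] at hst ⊢
  rw [← diagOp_sub]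
  exact diagOp_isPositive hst

lemma smul_one_isPositive {δ : ℝ} (hδ : 0 ≤ δ) :
    (δ • (1 : H →L[ℂ] H)).IsPositive := by
  constructor
  · exact ContinuousLinearMap.isSelfAdjoint_iff_isSymmetric.mp
      ((IsSelfAdjoint.all δ).smul (IsSelfAdjoint.one (H →L[ℂ] H)))
  · intro x
    rw [ContinuousLinearMap.reApplyInnerSelf_apply]
    simp only [ContinuousLinearMap.smul_apply, ContinuousLinearMap.one_apply]
    rw [RCLike.real_smul_eq_coe_smul (K := ℂ), inner_smul_left, RCLike.conj_ofReal,
      ← RCLike.real_smul_eq_coe_mul, RCLike.smul_re]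
    exact mul_nonneg hδ inner_self_nonneg

lemma isUnit_smul_one {δ : ℝ} (hδ : 0 < δ) : IsUnit (δ • (1 : H →L[ℂ] H)) := by
  have h1 : (δ • (1 : H →L[ℂ] H)) * (δ⁻¹ • (1 : H →L[ℂ] H)) = 1 := by
    rw [smul_mul_smul_comm, one_mul, mul_inv_cancel₀ hδ.ne', one_smul]
  have h2 : (δ⁻¹ • (1 : H →L[ℂ] H)) * (δ • (1 : H →L[ℂ] H)) = 1 := by
    rw [smul_mul_smul_comm, one_mul, inv_mul_cancel₀ hδ.ne', one_smul]
  exact ⟨⟨_, _, h1, h2⟩, rfl⟩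

/-- Facts about a strongly positive operator: it is nonneg, a unit, and its
`Ring.inverse` is nonneg. -/
lemma stronglyPositive_facts {E : Type*} [NormedAddCommGroup E] [InnerProductSpace ℂ E]
    [CompleteSpace E] {ρ : E →L[ℂ] E} (h : StronglyPositive ρ) :
    0 ≤ ρ ∧ IsUnit ρ ∧ 0 ≤ Ring.inverse ρ := by
  obtain ⟨δ, hδ, hle⟩ := h
  have h1 : (0 : E →L[ℂ] E) ≤ δ • 1 := by
    rw [ContinuousLinearMap.le_def, sub_zero]
    exact smul_one_isPositive hδ.le
  have h0 : (0 : E →L[ℂ] E) ≤ ρ := h1.trans hle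
  have hu : IsUnit ρ := CStarAlgebra.isUnit_of_le _ hle
    (IsStrictlyPositive.iff_of_unital.mpr ⟨h1, isUnit_smul_one hδ⟩)
  refine ⟨h0, hu, ?_⟩
  lift ρ to (E →L[ℂ] E)ˣ using hu
  rw [Ring.inverse_unit]
  exact CFC.inv_nonneg_of_nonneg ρ h0

lemma stronglyPositive_of_le {E : Type*} [NormedAddCommGroup E] [InnerProductSpace ℂ E]
    [CompleteSpace E] {ρ σ : E →L[ℂ] E} (h : StronglyPositive ρ) (hle : ρ ≤ σ) :
    StronglyPositive σ := by
  obtain ⟨δ, hδ, hρ⟩ := h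
  exact ⟨δ, hδ, hρ.trans hle⟩

lemma gap_sp {A11 : H →L[ℂ] H} {A22 : l2 H →L[ℂ] l2 H}
    (hgap : StronglyPositive (diagOp A11 - A22)) {s : H →L[ℂ] H} (hs : A11 ≤ s) :
    StronglyPositive (diagOp s - A22) := by
  refine stronglyPositive_of_le hgap ?_
  have : diagOp A11 ≤ diagOp s := diagOp_mono hs
  rw [ContinuousLinearMap.le_def] at this ⊢
  convert this using 1
  abel

/-- `A₁₁ ≤ ℱ(s)` whenever `diag{s} − A₂₂ ≫ 0`. -/
lemma riccatiMap_ge (A11 : H →L[ℂ] H) (A12 : l2 H →L[ℂ] H) {A22 : l2 H →L[ℂ] l2 H}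
    {s : H →L[ℂ] H} (hsp : StronglyPositive (diagOp s - A22)) :
    A11 ≤ riccatiMap A11 A12 A22 s := by
  obtain ⟨-, -, hinv⟩ := stronglyPositive_facts hsp
  rw [ContinuousLinearMap.le_def, riccatiMap, add_sub_cancel_left]
  rw [ContinuousLinearMap.le_def, sub_zero] at hinv
  exact hinv.conj_adjoint A12

/-- The Riccati map is antitone on the order interval above `A₁₁`. -/
lemma riccatiMap_antitone (A11 : H →L[ℂ] H) (A12 : l2 H →L[ℂ] H) {A22 : l2 H →L[ℂ] l2 H}
    (hgap : StronglyPositive (diagOp A11 - A22)) {s t : H →L[ℂ] H}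
    (hs : A11 ≤ s) (hst : s ≤ t) :
    riccatiMap A11 A12 A22 t ≤ riccatiMap A11 A12 A22 s := by
  have hsps := gap_sp hgap hs
  have hspt := gap_sp hgap (hs.trans hst)
  obtain ⟨hs0, hsu, -⟩ := stronglyPositive_facts hsps
  obtain ⟨ht0, htu, -⟩ := stronglyPositive_facts hspt
  have hGst : diagOp s - A22 ≤ diagOp t - A22 := by
    have := diagOp_mono hst
    rw [ContinuousLinearMap.le_def] at this ⊢
    convert this using 1
    abel
  lift (diagOp s - A22) to (l2 H →L[ℂ] l2 H)ˣ using hsu with us hus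
  lift (diagOp t - A22) to (l2 H →L[ℂ] l2 H)ˣ using htu with ut hut
  have hinvle : ((ut⁻¹ : (l2 H →L[ℂ] l2 H)ˣ) : l2 H →L[ℂ] l2 H) ≤
      ((us⁻¹ : (l2 H →L[ℂ] l2 H)ˣ) : l2 H →L[ℂ] l2 H) :=
    CStarAlgebra.inv_le_inv hs0 hGst
  rw [ContinuousLinearMap.le_def, riccatiMap, riccatiMap, ← hus, ← hut, Ring.inverse_unit,
    Ring.inverse_unit, add_sub_add_left_eq_sub, ← ContinuousLinearMap.comp_sub,
    ← ContinuousLinearMap.sub_comp]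
  rw [ContinuousLinearMap.le_def] at hinvle
  exact hinvle.conj_adjoint A12

lemma riccatiSeq_ge (A11 : H →L[ℂ] H) (A12 : l2 H →L[ℂ] H) {A22 : l2 H →L[ℂ] l2 H}
    (hgap : StronglyPositive (diagOp A11 - A22)) :
    ∀ n, A11 ≤ riccatiSeq A11 A12 A22 n := by
  intro n
  induction n with
  | zero => exact le_refl _
  | succ n ih =>
    show A11 ≤ riccatiMap A11 A12 A22 (riccatiSeq A11 A12 A22 n)
    exact riccatiMap_ge A11 A12 (gap_sp hgap ih)

lemma riccatiSeq_even_le_odd (A11 : H →L[ℂ] H) (A12 : l2 H →L[ℂ] H) {A22 : l2 H →L[ℂ] l2 H}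
    (hgap : StronglyPositive (diagOp A11 - A22)) :
    ∀ n, riccatiSeq A11 A12 A22 (2 * n) ≤ riccatiSeq A11 A12 A22 (2 * n + 1) := by
  intro n
  induction n with
  | zero =>
    show riccatiSeq A11 A12 A22 0 ≤ riccatiMap A11 A12 A22 (riccatiSeq A11 A12 A22 0)
    exact riccatiMap_ge A11 A12 (gap_sp hgap (le_refl _))
  | succ n ih =>
    have h1 : A11 ≤ riccatiSeq A11 A12 A22 (2 * n) := riccatiSeq_ge A11 A12 hgap _
    -- s_{2n+2} = ℱ(s_{2n+1}) ≤ ℱ(s_{2n}) = s_{2n+1}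
    have h2 : riccatiSeq A11 A12 A22 (2 * n + 2) ≤ riccatiSeq A11 A12 A22 (2 * n + 1) := by
      show riccatiMap A11 A12 A22 (riccatiSeq A11 A12 A22 (2 * n + 1)) ≤
        riccatiSeq A11 A12 A22 (2 * n + 1)
      have := riccatiMap_antitone A11 A12 hgap h1 ih
      exact this
    -- s_{2n+2} ≤ s_{2n+3} = ℱ(s_{2n+2})
    have h3 : riccatiSeq A11 A12 A22 (2 * n + 2) ≤ riccatiSeq A11 A12 A22 (2 * n + 3) := by
      have h4 : A11 ≤ riccatiSeq A11 A12 A22 (2 * n + 2) := riccatiSeq_ge A11 A12 hgap _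
      exact riccatiMap_antitone A11 A12 hgap h4 h2
    have hidx1 : 2 * (n + 1) = 2 * n + 2 := by ring
    rw [hidx1]
    exact h3

end Aux

/-- **Lemma 2.2 (part 3).**  The strong limit of the even successive approximations is
dominated, in the Loewner order, by the strong limit of the odd ones: `s̲ ≤ s̄`. -/
theorem riccati_even_limit_le_odd_limit
    {H : Type*} [NormedAddCommGroup H] [InnerProductSpace ℂ H] [CompleteSpace H]
    [TopologicalSpace.SeparableSpace H]
    (A11 : H →L[ℂ] H) (A12 : l2 H →L[ℂ] H) (A22 : l2 H →L[ℂ] l2 H)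
    (hA11sa : IsSelfAdjoint A11) (hA22sa : IsSelfAdjoint A22)
    (hgap : StronglyPositive (diagOp A11 - A22))
    (slim sbar : H →L[ℂ] H) (hslim : IsSelfAdjoint slim) (hsbar : IsSelfAdjoint sbar)
    (heven : ∀ x : H, Filter.Tendsto (fun n => riccatiSeq A11 A12 A22 (2 * n) x)
      Filter.atTop (𝓝 (slim x)))
    (hodd : ∀ x : H, Filter.Tendsto (fun n => riccatiSeq A11 A12 A22 (2 * n + 1) x)
      Filter.atTop (𝓝 (sbar x))) :
    slim ≤ sbar := by
  rw [ContinuousLinearMap.le_def]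
  refine ⟨ContinuousLinearMap.isSelfAdjoint_iff_isSymmetric.mp (hsbar.sub hslim), fun x => ?_⟩
  rw [ContinuousLinearMap.reApplyInnerSelf_apply]
  have key : ∀ n : ℕ, RCLike.re (inner ℂ (riccatiSeq A11 A12 A22 (2 * n) x) x : ℂ) ≤
      RCLike.re (inner ℂ (riccatiSeq A11 A12 A22 (2 * n + 1) x) x : ℂ) := by
    intro n
    have h := (riccatiSeq_even_le_odd A11 A12 hgap n).2 x
    rw [ContinuousLinearMap.reApplyInnerSelf_apply, ContinuousLinearMap.sub_apply,
      inner_sub_left, map_sub] at h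
    linarith
  have hev : Filter.Tendsto (fun n => RCLike.re (inner ℂ (riccatiSeq A11 A12 A22 (2 * n) x) x : ℂ))
      Filter.atTop (𝓝 (RCLike.re (inner ℂ (slim x) x : ℂ))) :=
    (RCLike.continuous_re.tendsto _).comp ((heven x).inner tendsto_const_nhds)
  have hod : Filter.Tendsto
      (fun n => RCLike.re (inner ℂ (riccatiSeq A11 A12 A22 (2 * n + 1) x) x : ℂ))
      Filter.atTop (𝓝 (RCLike.re (inner ℂ (sbar x) x : ℂ))) :=
    (RCLike.continuous_re.tendsto _).comp ((hodd x).inner tendsto_const_nhds)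
  have hle := le_of_tendsto_of_tendsto' hev hod key
  rw [ContinuousLinearMap.sub_apply, inner_sub_left, map_sub]
  linarith
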